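/- arXiv:1705.01512 — 6 statements merged into one kernel-verified Lean document; each statement's English description precedes it below -/
import Mathlib

section
/- If an invertible linear map L : ℝⁿ → ℝⁿ maps some open Euclidean ball of positive radius onto another open Euclidean ball, then L is a conformal linear map, i.e., L = λ • T for some λ > 0 and a linear isometry T. -/
lemma aux_bound {E F : Type*} [NormedAddCommGroup E] [NormedSpace ℝ E]
    [NormedAddCommGroup F] [NormedSpace ℝ F] (f : E →ₗ[ℝ] F) {r r' : ℝ}
    (hr : 0 < r) (hr' : 0 < r') (h : ∀ x : E, ‖x‖ < r → ‖f x‖ < r') (x : E) :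
    ‖f x‖ ≤ (r' / r) * ‖x‖ := by
  apply le_of_forall_pos_le_add
  intro ε hε
  set δ := ε * r / r' with hδdef
  have hδ : 0 < δ := by positivity
  have hx : (0:ℝ) < ‖x‖ + δ := by positivity
  have hy : ‖(r / (‖x‖ + δ)) • x‖ < r := by
    rw [norm_smul, Real.norm_eq_abs, abs_of_pos (by positivity),
      div_mul_eq_mul_div, div_lt_iff₀ hx]
    nlinarith [norm_nonneg x]
  have hfy := h _ hy
  rw [map_smul, norm_smul, Real.norm_eq_abs, abs_of_pos (by positivity),
    div_mul_eq_mul_div, div_lt_iff₀ hx] at hfy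
  have hrd : r' * δ = ε * r := by rw [hδdef]; field_simp
  have key : r * ‖f x‖ < r' * ‖x‖ + ε * r := by nlinarith
  rw [div_mul_eq_mul_div, ← sub_nonneg]
  have heq : r' * ‖x‖ / r + ε - ‖f x‖ = (r' * ‖x‖ + ε * r - r * ‖f x‖) / r := by
    field_simp
  rw [heq]
  exact div_nonneg (by linarith) hr.le
  
theorem stmt_1 (n : ℕ)
    (L : EuclideanSpace ℝ (Fin n) ≃ₗ[ℝ] EuclideanSpace ℝ (Fin n))
    (c c' : EuclideanSpace ℝ (Fin n)) (r r' : ℝ) (hr : 0 < r) (hr' : 0 < r')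
    (h : (fun x => L x) '' Metric.ball c r = Metric.ball c' r') :
    ∃ (lam : ℝ) (T : EuclideanSpace ℝ (Fin n) →ₗᵢ[ℝ] EuclideanSpace ℝ (Fin n)),
      0 < lam ∧ ∀ x, L x = lam • T x := by
  have hmem : ∀ x, x ∈ Metric.ball c r → L x ∈ Metric.ball c' r' := by
    intro x hx; rw [← h]; exact ⟨x, hx, rfl⟩
  have h1 : ∀ x, ‖x‖ < r → ‖L x‖ < r' := by
    intro x hx
    have ha := hmem (c + x) (by simpa [Metric.mem_ball, dist_eq_norm] using hx)
    have hb := hmem (c - x) (by simpa [Metric.mem_ball, dist_eq_norm] using hx)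
    rw [Metric.mem_ball, dist_eq_norm] at ha hb
    have he : L (c + x) - L (c - x) = (2:ℝ) • L x := by
      rw [← map_sub, ← map_smul]; congr 1; module
    have h2 : ‖L (c + x) - L (c - x)‖ < 2 * r' := by
      calc ‖L (c + x) - L (c - x)‖ ≤ ‖L (c + x) - c'‖ + ‖L (c - x) - c'‖ := by
            have := norm_sub_le (L (c + x) - c') (L (c - x) - c'); simpa using this
        _ < 2 * r' := by linarith
    rw [he, norm_smul] at h2
    simp only [Real.norm_ofNat] at h2
    linarith
  have h2 : ∀ y, ‖y‖ < r' → ‖L.symm y‖ < r := by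
    intro y hy
    have hay : c' + y ∈ Metric.ball c' r' := by
      simpa [Metric.mem_ball, dist_eq_norm] using hy
    have hby : c' - y ∈ Metric.ball c' r' := by
      simpa [Metric.mem_ball, dist_eq_norm] using hy
    rw [← h] at hay hby
    obtain ⟨a, ha, hLa⟩ := hay
    obtain ⟨b, hb, hLb⟩ := hby
    rw [Metric.mem_ball, dist_eq_norm] at ha hb
    have he : (2:ℝ) • L.symm y = a - b := by
      have : L (a - b) = (2:ℝ) • y := by
        simp only [map_sub, hLa, hLb]; module
      have := congrArg L.symm this
      simpa [map_smul] using this.symm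
    have hab : ‖a - b‖ < 2 * r := by
      calc ‖a - b‖ ≤ ‖a - c‖ + ‖b - c‖ := by
            have := norm_sub_le (a - c) (b - c); simpa using this
        _ < 2 * r := by linarith
    rw [← he, norm_smul] at hab
    simp only [Real.norm_ofNat] at hab
    linarith
  have hub : ∀ x, ‖L x‖ ≤ (r' / r) * ‖x‖ := fun x =>
    aux_bound L.toLinearMap hr hr' h1 x
  have hlb : ∀ x, ‖x‖ ≤ (r / r') * ‖L x‖ := fun x => by
    simpa using aux_bound L.symm.toLinearMap hr' hr h2 (L x)
  have heq : ∀ x, ‖L x‖ = (r' / r) * ‖x‖ := by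
    intro x
    refine le_antisymm (hub x) ?_
    have h3 := hlb x
    rw [div_mul_eq_mul_div, le_div_iff₀ hr'] at h3
    rw [div_mul_eq_mul_div, div_le_iff₀ hr]
    nlinarith
  have hlam : (0:ℝ) < r' / r := by positivity
  refine ⟨r' / r, ⟨(r' / r)⁻¹ • L.toLinearMap, ?_⟩, hlam, ?_⟩
  · intro x
    simp only [LinearMap.smul_apply, norm_smul, Real.norm_eq_abs,
      abs_of_pos (inv_pos.mpr hlam), LinearEquiv.coe_coe]
    rw [heq x, ← mul_assoc, inv_mul_cancel₀ hlam.ne', one_mul]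
  · intro x
    show L x = (r' / r) • ((r' / r)⁻¹ • L x)
    rw [smul_smul, mul_inv_cancel₀ hlam.ne', one_smul]
end

section
/- Let f : ℝⁿ → ℝⁿ be continuous and differentiable at the origin 0 with derivative D₀f. Suppose there is a sequence of open Euclidean balls (Bᵢ) each containing 0, with diameters tending to 0, such that for each i the image f(Bᵢ) is an open Euclidean ball. Then D₀f = λ • T where λ ≥ 0 and T is a linear isometry of ℝⁿ (the derivative is a possibly degenerate conformal linear map). -/
open Filter

open RealInnerProductSpace in
private lemma helper_sup {a b R : ℝ} (hR : 0 < R) (ha : 0 ≤ a) (hb : 0 ≤ b)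
    (h : ∀ t : ℝ, 0 < t → t < R → t * a ≤ b) : R * a ≤ b := by
  by_contra hc
  push_neg at hc
  have ha' : 0 < a := by nlinarith
  have h1 : b / a < R := by rw [div_lt_iff₀ ha']; nlinarith
  have h2 : 0 < (b / a + R) / 2 := by positivity
  have h3 : (b / a + R) / 2 < R := by linarith
  have h4 := h _ h2 h3
  have key : b / a * a = b := div_mul_cancel₀ _ ha'.ne'
  nlinarith

set_option maxHeartbeats 1000000 in
open RealInnerProductSpace in
theorem stmt_2 (n : ℕ) (f : EuclideanSpace ℝ (Fin n) → EuclideanSpace ℝ (Fin n))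
    (hf : Continuous f)
    (D : EuclideanSpace ℝ (Fin n) →L[ℝ] EuclideanSpace ℝ (Fin n))
    (hD : HasFDerivAt f D 0)
    (c : ℕ → EuclideanSpace ℝ (Fin n)) (r : ℕ → ℝ)
    (hr : ∀ i, 0 < r i)
    (h0 : ∀ i, (0 : EuclideanSpace ℝ (Fin n)) ∈ Metric.ball (c i) (r i))
    (hrt : Tendsto r atTop (nhds 0))
    (him : ∀ i, ∃ (c' : EuclideanSpace ℝ (Fin n)) (r' : ℝ), 0 < r' ∧
      f '' Metric.ball (c i) (r i) = Metric.ball c' r') :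
    ∃ (lam : ℝ) (T : EuclideanSpace ℝ (Fin n) →ₗᵢ[ℝ] EuclideanSpace ℝ (Fin n)),
      0 ≤ lam ∧ ∀ x, D x = lam • T x := by
  classical
  choose c' r' hr' himeq using him
  have hcnorm : ∀ i, ‖c i‖ < r i := by
    intro i
    have := h0 i
    rwa [Metric.mem_ball, dist_comm, dist_zero_right] at this
  -- the error term is eventually small on the balls
  have key : ∀ ε : ℝ, 0 < ε → ∀ᶠ i in atTop,
      ∀ x ∈ Metric.ball (c i) (r i), ‖f x - f 0 - D x‖ ≤ ε * (2 * r i) := by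
    intro ε hε
    have ho := hD.isLittleO
    rw [Asymptotics.isLittleO_iff] at ho
    have h1 := ho hε
    simp only [sub_zero] at h1
    rw [Metric.eventually_nhds_iff] at h1
    obtain ⟨δ, hδ, hδ'⟩ := h1
    have h2 : ∀ᶠ i in atTop, r i < δ / 2 := hrt.eventually (gt_mem_nhds (by positivity))
    filter_upwards [h2] with i hi x hx
    have hxn : ‖x‖ < 2 * r i := by
      calc ‖x‖ ≤ ‖x - c i‖ + ‖c i‖ := by
            have := norm_add_le (x - c i) (c i); simpa using this
      _ < r i + r i := by
          have : dist x (c i) < r i := hx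
          rw [dist_eq_norm] at this
          linarith [hcnorm i]
      _ = 2 * r i := by ring
    have := hδ' (show dist x 0 < δ by rw [dist_zero_right]; linarith)
    calc ‖f x - f 0 - D x‖ ≤ ε * ‖x‖ := this
    _ ≤ ε * (2 * r i) := by nlinarith
  -- lower bound on r' i
  have lemA : ∀ u : EuclideanSpace ℝ (Fin n), ‖u‖ = 1 → ∀ ε : ℝ, 0 < ε →
      ∀ᶠ i in atTop, r i * ‖D u‖ ≤ r' i + 2 * ε * r i := by
    intro u hu ε hε
    filter_upwards [key ε hε] with i hi
    have hball : ∀ x ∈ Metric.ball (c i) (r i), f x ∈ Metric.ball (c' i) (r' i) := by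
      intro x hx
      rw [← himeq i]; exact Set.mem_image_of_mem f hx
    have step : ∀ t : ℝ, 0 < t → t < r i → t * (2 * ‖D u‖) ≤ 2 * r' i + 4 * ε * r i := by
      intro t ht htr
      have hxp : c i + t • u ∈ Metric.ball (c i) (r i) := by
        rw [Metric.mem_ball, dist_eq_norm, add_sub_cancel_left, norm_smul, hu]
        simpa [abs_of_pos ht] using htr
      have hxm : c i - t • u ∈ Metric.ball (c i) (r i) := by
        rw [Metric.mem_ball, dist_eq_norm, sub_sub_cancel_left, norm_neg, norm_smul, hu]
        simpa [abs_of_pos ht] using htr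
      have hd : dist (f (c i + t • u)) (f (c i - t • u)) < 2 * r' i := by
        calc dist (f (c i + t • u)) (f (c i - t • u))
            ≤ dist (f (c i + t • u)) (c' i) + dist (c' i) (f (c i - t • u)) := dist_triangle _ _ _
        _ < r' i + r' i := by
            have h1 := hball _ hxp
            have h2 := hball _ hxm
            rw [Metric.mem_ball] at h1 h2
            rw [dist_comm (c' i)] at *
            linarith
        _ = 2 * r' i := by ring
      have hdecomp : f (c i + t • u) - f (c i - t • u) =
          (2 * t) • D u + ((f (c i + t • u) - f 0 - D (c i + t • u)) -
            (f (c i - t • u) - f 0 - D (c i - t • u))) := by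
        have : D (c i + t • u) - D (c i - t • u) = (2 * t) • D u := by
          rw [← map_sub]
          have : (c i + t • u) - (c i - t • u) = (2 * t) • u := by
            rw [two_mul, add_smul]; abel
          rw [this, map_smul]
        rw [← this]; abel
      have hnorm : 2 * t * ‖D u‖ - 2 * (ε * (2 * r i)) ≤
          ‖f (c i + t • u) - f (c i - t • u)‖ := by
        set a := (2 * t) • D u with h_a
        set b := (f (c i + t • u) - f 0 - D (c i + t • u)) -
          (f (c i - t • u) - f 0 - D (c i - t • u)) with hb
        rw [hdecomp]
        have h1 := hi _ hxp
        have h2 := hi _ hxm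
        have h3 : ‖a‖ = 2 * t * ‖D u‖ := by
          rw [h_a, norm_smul, Real.norm_eq_abs, abs_of_pos (by linarith)]
        have h4 : ‖b‖ ≤ 2 * (ε * (2 * r i)) := by
          have := norm_sub_le (f (c i + t • u) - f 0 - D (c i + t • u))
            (f (c i - t • u) - f 0 - D (c i - t • u))
          rw [hb]; linarith
        have h5 : ‖a‖ ≤ ‖a + b‖ + ‖b‖ := by
          have := norm_add_le (a + b) (-b)
          simpa using this
        linarith
      rw [dist_eq_norm] at hd
      nlinarith [norm_nonneg (D u)]
    have := helper_sup (hr i) (by positivity) (by nlinarith [hr' i, hr i, hε]) step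
    nlinarith [norm_nonneg (D u)]
  -- upper bound on r' i
  have lemB : ∀ w : EuclideanSpace ℝ (Fin n), ‖w‖ = 1 → ∀ ε : ℝ, 0 < ε →
      ∀ᶠ i in atTop, r' i ≤ r i * ‖(ContinuousLinearMap.adjoint D) w‖ + 2 * ε * r i := by
    intro w hw ε hε
    filter_upwards [key ε hε] with i hi
    have step : ∀ t : ℝ, 0 < t → t < r' i →
        t * 2 ≤ 2 * r i * ‖(ContinuousLinearMap.adjoint D) w‖ + 4 * ε * r i := by
      intro t ht htr
      have hpp : c' i + t • w ∈ Metric.ball (c' i) (r' i) := by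
        rw [Metric.mem_ball, dist_eq_norm, add_sub_cancel_left, norm_smul, hw]
        simpa [abs_of_pos ht] using htr
      have hpm : c' i - t • w ∈ Metric.ball (c' i) (r' i) := by
        rw [Metric.mem_ball, dist_eq_norm, sub_sub_cancel_left, norm_neg, norm_smul, hw]
        simpa [abs_of_pos ht] using htr
      rw [← himeq i] at hpp hpm
      obtain ⟨xp, hxp, hfxp⟩ := hpp
      obtain ⟨xm, hxm, hfxm⟩ := hpm
      have hip : ⟪f xp - f xm, w⟫ = 2 * t := by
        rw [hfxp, hfxm]
        have : (c' i + t • w) - (c' i - t • w) = (2 * t) • w := by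
          rw [two_mul, add_smul]; abel
        rw [this, real_inner_smul_left, real_inner_self_eq_norm_sq, hw]
        ring
      have hdecomp : f xp - f xm = D (xp - xm) + ((f xp - f 0 - D xp) - (f xm - f 0 - D xm)) := by
        rw [map_sub]; abel
      have hxx : ‖xp - xm‖ < 2 * r i := by
        calc ‖xp - xm‖ ≤ ‖xp - c i‖ + ‖c i - xm‖ := by
              have := norm_sub_le_norm_sub_add_norm_sub xp (c i) xm
              linarith
        _ < r i + r i := by
              rw [Metric.mem_ball, dist_eq_norm] at hxp hxm
              rw [norm_sub_rev (c i)]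
              linarith
        _ = 2 * r i := by ring
      have h1 : ⟪D (xp - xm), w⟫ ≤ 2 * r i * ‖(ContinuousLinearMap.adjoint D) w‖ := by
        rw [← ContinuousLinearMap.adjoint_inner_right]
        calc ⟪xp - xm, (ContinuousLinearMap.adjoint D) w⟫
            ≤ ‖xp - xm‖ * ‖(ContinuousLinearMap.adjoint D) w‖ := real_inner_le_norm _ _
        _ ≤ 2 * r i * ‖(ContinuousLinearMap.adjoint D) w‖ := by
            have := norm_nonneg ((ContinuousLinearMap.adjoint D) w)
            nlinarith
      have h2 : ⟪(f xp - f 0 - D xp) - (f xm - f 0 - D xm), w⟫ ≤ 4 * ε * r i := by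
        calc ⟪(f xp - f 0 - D xp) - (f xm - f 0 - D xm), w⟫
            ≤ ‖(f xp - f 0 - D xp) - (f xm - f 0 - D xm)‖ * ‖w‖ := real_inner_le_norm _ _
        _ ≤ (ε * (2 * r i) + ε * (2 * r i)) * 1 := by
            rw [hw]
            have := norm_sub_le (f xp - f 0 - D xp) (f xm - f 0 - D xm)
            have h1' := hi _ hxp
            have h2' := hi _ hxm
            nlinarith
        _ = 4 * ε * r i := by ring
      have : ⟪f xp - f xm, w⟫ ≤ 2 * r i * ‖(ContinuousLinearMap.adjoint D) w‖ + 4 * ε * r i := by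
        rw [hdecomp, inner_add_left]
        linarith
      rw [hip] at this
      linarith
    have := helper_sup (hr' i) (by norm_num) (by nlinarith [hr i, hε, norm_nonneg ((ContinuousLinearMap.adjoint D) w)]) step
    nlinarith
  -- for every unit u, w : ‖D u‖ ≤ ‖D† w‖
  have huw : ∀ u : EuclideanSpace ℝ (Fin n), ‖u‖ = 1 → ∀ w : EuclideanSpace ℝ (Fin n), ‖w‖ = 1 →
      ‖D u‖ ≤ ‖(ContinuousLinearMap.adjoint D) w‖ := by
    intro u hu w hw
    refine le_of_forall_pos_le_add ?_
    intro ε hε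
    have h1 := lemA u hu (ε / 4) (by positivity)
    have h2 := lemB w hw (ε / 4) (by positivity)
    obtain ⟨i, hi1, hi2⟩ := (h1.and h2).exists
    have hri := hr i
    have : r i * ‖D u‖ ≤ r i * ‖(ContinuousLinearMap.adjoint D) w‖ + ε * r i := by linarith
    have := (mul_le_mul_iff_right₀ hri).mp (by linarith [this] : r i * ‖D u‖ ≤ r i * (‖(ContinuousLinearMap.adjoint D) w‖ + ε))
    linarith
  -- the adjoint has constant norm ‖D‖ on the unit sphere
  have hDadj : ∀ x : EuclideanSpace ℝ (Fin n), ‖(ContinuousLinearMap.adjoint D) x‖ = ‖D‖ * ‖x‖ := by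
    have hunit : ∀ w : EuclideanSpace ℝ (Fin n), ‖w‖ = 1 → ‖(ContinuousLinearMap.adjoint D) w‖ = ‖D‖ := by
      intro w hw
      refine le_antisymm ?_ ?_
      · calc ‖(ContinuousLinearMap.adjoint D) w‖ ≤ ‖ContinuousLinearMap.adjoint D‖ * ‖w‖ :=
            (ContinuousLinearMap.adjoint D).le_opNorm w
        _ = ‖D‖ := by rw [hw, mul_one]; exact ContinuousLinearMap.adjoint.norm_map D
      · refine D.opNorm_le_bound (norm_nonneg _) ?_
        intro x
        rcases eq_or_ne x 0 with rfl | hx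
        · simp
        · have hxn : (0:ℝ) < ‖x‖ := norm_pos_iff.mpr hx
          have hu : ‖(‖x‖⁻¹ • x : EuclideanSpace ℝ (Fin n))‖ = 1 := by
            rw [norm_smul, Real.norm_eq_abs, abs_of_pos (inv_pos.mpr hxn), inv_mul_cancel₀ hxn.ne']
          have := huw _ hu w hw
          rw [map_smul, norm_smul, Real.norm_eq_abs, abs_of_pos (inv_pos.mpr hxn)] at this
          calc ‖D x‖ = ‖x‖ * (‖x‖⁻¹ * ‖D x‖) := by field_simp
          _ ≤ ‖x‖ * ‖(ContinuousLinearMap.adjoint D) w‖ := by nlinarith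
          _ = ‖(ContinuousLinearMap.adjoint D) w‖ * ‖x‖ := mul_comm _ _
    intro x
    rcases eq_or_ne x 0 with rfl | hx
    · rw [map_zero, norm_zero]; ring
    · have hxn : (0:ℝ) < ‖x‖ := norm_pos_iff.mpr hx
      have hu : ‖(‖x‖⁻¹ • x : EuclideanSpace ℝ (Fin n))‖ = 1 := by
        rw [norm_smul, Real.norm_eq_abs, abs_of_pos (inv_pos.mpr hxn), inv_mul_cancel₀ hxn.ne']
      have h := hunit _ hu
      rw [map_smul, norm_smul, Real.norm_eq_abs, abs_of_pos (inv_pos.mpr hxn)] at h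
      have h2 : ‖x‖ * (‖x‖⁻¹ * ‖(ContinuousLinearMap.adjoint D) x‖) = ‖x‖ * ‖D‖ := by rw [h]
      rw [← mul_assoc, mul_inv_cancel₀ hxn.ne', one_mul] at h2
      linarith
  -- now conclude
  set lam := ‖D‖ with hlam
  rcases eq_or_lt_of_le (norm_nonneg D) with h0' | h0'
  · refine ⟨0, LinearIsometry.id, le_refl 0, ?_⟩
    intro x
    have : D = 0 := norm_eq_zero.mp h0'.symm
    simp [this]
  · -- lam > 0; first, the adjoint scaled is inner-preserving
    have hinner : ∀ a b : EuclideanSpace ℝ (Fin n), ⟪(ContinuousLinearMap.adjoint D) a, (ContinuousLinearMap.adjoint D) b⟫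
        = lam ^ 2 * ⟪a, b⟫ := by
      intro a b
      rw [real_inner_eq_norm_add_mul_self_sub_norm_mul_self_sub_norm_mul_self_div_two,
        real_inner_eq_norm_add_mul_self_sub_norm_mul_self_sub_norm_mul_self_div_two a b,
        ← map_add, hDadj, hDadj, hDadj]
      ring
    have hDDadj : ∀ a : EuclideanSpace ℝ (Fin n), D ((ContinuousLinearMap.adjoint D) a) = (lam ^ 2) • a := by
      intro a
      apply ext_inner_right ℝ
      intro b
      rw [← ContinuousLinearMap.adjoint_inner_right, hinner, real_inner_smul_left]
    have hsurj : Function.Surjective (ContinuousLinearMap.adjoint D) := by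
      have hinj : Function.Injective (ContinuousLinearMap.adjoint D) := by
        intro a b hab
        have : ‖(ContinuousLinearMap.adjoint D) (a - b)‖ = lam * ‖a - b‖ := hDadj _
        rw [map_sub, hab, sub_self, norm_zero] at this
        have : ‖a - b‖ = 0 := by
          by_contra hne
          have : 0 < ‖a - b‖ := lt_of_le_of_ne (norm_nonneg _) (Ne.symm hne)
          nlinarith
        rwa [norm_eq_zero, sub_eq_zero] at this
      exact (LinearMap.injective_iff_surjective (f := ((ContinuousLinearMap.adjoint D) : EuclideanSpace ℝ (Fin n) →ₗ[ℝ] EuclideanSpace ℝ (Fin n)))).mp hinj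
    have hDx : ∀ x : EuclideanSpace ℝ (Fin n), ‖D x‖ = lam * ‖x‖ := by
      intro x
      obtain ⟨a, rfl⟩ := hsurj x
      rw [hDDadj, norm_smul, hDadj, Real.norm_eq_abs, abs_of_pos (by positivity)]
      ring
    refine ⟨lam, ⟨lam⁻¹ • (D : EuclideanSpace ℝ (Fin n) →ₗ[ℝ] EuclideanSpace ℝ (Fin n)), ?_⟩, le_of_lt h0', ?_⟩
    · intro x
      simp only [LinearMap.smul_apply, norm_smul, Real.norm_eq_abs,
        abs_of_pos (inv_pos.mpr h0')]
      rw [ContinuousLinearMap.coe_coe, hDx, ← mul_assoc, hlam, abs_of_pos (inv_pos.mpr h0'), inv_mul_cancel₀ h0'.ne', one_mul]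
    · intro x
      simp only [LinearIsometry.coe_mk, LinearMap.smul_apply, ContinuousLinearMap.coe_coe]
      rw [smul_smul, mul_inv_cancel₀ h0'.ne', one_smul]
end

section
/- Let f : ℝⁿ → ℝⁿ be a C¹ diffeomorphism whose derivative is uniformly continuous, let p ∈ ℝⁿ, and suppose there exist balls Bᵢ = B(qᵢ, rᵢ) with rᵢ → 0 and closed balls converging to {p} in Hausdorff distance, such that f maps each sphere ∂Bᵢ onto a Euclidean sphere. Then D_p f is a conformal linear map: D_p f = λ • T with λ > 0 and T a linear isometry. -/
open Filter


set_option maxHeartbeats 1000000 in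
private lemma stmt6_aux (B nA ρ ε ri x y au au' av av' : ℝ)
    (hri : 0 < ri) (hε : 0 < ε) (hε1 : ε ≤ 1) (hρ : 0 < ρ) (hnA : 0 ≤ nA)
    (hrho : ρ ≤ (nA + 1) * ri)
    (hau0 : 0 ≤ au) (hau'0 : 0 ≤ au') (hav0 : 0 ≤ av) (hav'0 : 0 ≤ av')
    (hau : au ≤ ρ + ε * ri) (hau' : au' ≤ ρ + ε * ri)
    (hav : ρ - ε * ri ≤ av) (hav' : ρ - ε * ri ≤ av')
    (Pu : au * au + au' * au' = 2 * (B * B + ri * x * (ri * x)))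
    (Pv : av * av + av' * av' = 2 * (B * B + ri * y * (ri * y))) :
    x ^ 2 ≤ y ^ 2 + 10 * (nA + 1) * ε := by
  have hav2 : ρ ^ 2 - 2 * ρ * (ε * ri) ≤ av ^ 2 := by
    rcases le_or_gt (ε * ri) ρ with h | h
    · have hm := mul_nonneg (sub_nonneg.2 hav)
        (show (0:ℝ) ≤ av + (ρ - ε * ri) by linarith)
      nlinarith [hm, sq_nonneg (ε * ri)]
    · nlinarith [sq_nonneg av, mul_pos hρ (mul_pos hε hri)]
  have hav'2 : ρ ^ 2 - 2 * ρ * (ε * ri) ≤ av' ^ 2 := by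
    rcases le_or_gt (ε * ri) ρ with h | h
    · have hm := mul_nonneg (sub_nonneg.2 hav')
        (show (0:ℝ) ≤ av' + (ρ - ε * ri) by linarith)
      nlinarith [hm, sq_nonneg (ε * ri)]
    · nlinarith [sq_nonneg av', mul_pos hρ (mul_pos hε hri)]
  have hau2 : au ^ 2 ≤ (ρ + ε * ri) ^ 2 := by nlinarith
  have hau'2 : au' ^ 2 ≤ (ρ + ε * ri) ^ 2 := by nlinarith
  have h3 : ρ * (ε * ri) ≤ (nA + 1) * ri * (ε * ri) :=
    mul_le_mul_of_nonneg_right hrho (by positivity)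
  have h4 : (ε * ri) ^ 2 ≤ ε * ri ^ 2 := by nlinarith
  have h2 : ri ^ 2 * x ^ 2 ≤ ri ^ 2 * (y ^ 2 + 10 * (nA + 1) * ε) := by
    nlinarith [sq_nonneg ri]
  have := (mul_le_mul_iff_right₀ (by positivity : (0:ℝ) < ri ^ 2)).mp h2
  linarith

set_option maxHeartbeats 1000000 in
theorem stmt_6 (n : ℕ) (hn : 2 ≤ n)
    (f : EuclideanSpace ℝ (Fin n) → EuclideanSpace ℝ (Fin n))
    (hf : ContDiff ℝ 1 f) (hbij : Function.Bijective f)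
    (hinv : ∀ x, Function.Bijective (fderiv ℝ f x))
    (hu : UniformContinuous (fderiv ℝ f))
    (p : EuclideanSpace ℝ (Fin n)) (q : ℕ → EuclideanSpace ℝ (Fin n)) (r : ℕ → ℝ)
    (hr : ∀ i, 0 < r i) (hrt : Tendsto r atTop (nhds 0))
    (hH : Tendsto (fun i => Metric.hausdorffDist (Metric.closedBall (q i) (r i))
      ({p} : Set (EuclideanSpace ℝ (Fin n)))) atTop (nhds 0))
    (hsph : ∀ i, ∃ (c : EuclideanSpace ℝ (Fin n)) (ρ : ℝ), 0 < ρ ∧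
      f '' Metric.sphere (q i) (r i) = Metric.sphere c ρ) :
    ∃ (lam : ℝ) (T : EuclideanSpace ℝ (Fin n) →ₗᵢ[ℝ] EuclideanSpace ℝ (Fin n)),
      0 < lam ∧ ∀ x, fderiv ℝ f p x = lam • T x := by
  classical
  set A := fderiv ℝ f p with hA
  -- q i → p
  have hqd : ∀ i, dist (q i) p ≤
      Metric.hausdorffDist (Metric.closedBall (q i) (r i))
        ({p} : Set (EuclideanSpace ℝ (Fin n))) := by
    intro i
    have hne : EMetric.hausdorffEdist (Metric.closedBall (q i) (r i))
        ({p} : Set (EuclideanSpace ℝ (Fin n))) ≠ ⊤ :=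
      Metric.hausdorffEdist_ne_top_of_nonempty_of_bounded
        ⟨q i, Metric.mem_closedBall_self (hr i).le⟩ ⟨p, rfl⟩
        Metric.isBounded_closedBall (Bornology.isBounded_singleton)
    have := Metric.infDist_le_hausdorffDist_of_mem
      (Metric.mem_closedBall_self (hr i).le) hne
    rwa [Metric.infDist_singleton] at this
  have hqtend : Tendsto (fun i => dist (q i) p) atTop (nhds 0) :=
    squeeze_zero (fun i => dist_nonneg) hqd hH
  -- continuity of the derivative at p
  have hA_cont : ContinuousAt (fderiv ℝ f) p := hu.continuous.continuousAt
  -- main quantitative estimate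
  have main : ∀ ε : ℝ, 0 < ε → ε ≤ 1 →
      ∀ u v : EuclideanSpace ℝ (Fin n), ‖u‖ = 1 → ‖v‖ = 1 →
        ‖A u‖ ^ 2 ≤ ‖A v‖ ^ 2 + (10 * (‖A‖ + 1)) * ε := by
    intro ε hε hε1 u v hu1 hv1
    obtain ⟨δ, hδpos, hδ⟩ := Metric.continuousAt_iff.mp hA_cont ε hε
    -- choose a good index
    have h1 : Tendsto (fun i => dist (q i) p + r i) atTop (nhds 0) := by
      simpa using hqtend.add hrt
    obtain ⟨i, hi⟩ := (h1.eventually (gt_mem_nhds hδpos)).exists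
    have hri := hr i
    have hsub : Metric.closedBall (q i) (r i) ⊆ Metric.ball p δ := by
      intro z hz
      have hz' : dist z (q i) ≤ r i := hz
      calc dist z p ≤ dist z (q i) + dist (q i) p := dist_triangle _ _ _
        _ < δ := by linarith
    have hbound : ∀ x ∈ Metric.ball p δ, ‖fderiv ℝ f x - A‖ ≤ ε := by
      intro x hx
      have := hδ hx
      rw [dist_eq_norm] at this
      exact this.le
    have hdiff : ∀ x ∈ Metric.ball p δ, DifferentiableAt ℝ f x :=
      fun x _ => hf.differentiable one_ne_zero x
    have hmvt : ∀ x ∈ Metric.ball p δ, ∀ y ∈ Metric.ball p δ,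
        ‖f y - f x - A (y - x)‖ ≤ ε * ‖y - x‖ := fun x hx y hy =>
      Convex.norm_image_sub_le_of_norm_fderiv_le' hdiff hbound
        (convex_ball p δ) hx hy
    obtain ⟨c, ρ, hρpos, hsp⟩ := hsph i
    have hmems : ∀ w : EuclideanSpace ℝ (Fin n), ‖w‖ = 1 →
        q i + r i • w ∈ Metric.sphere (q i) (r i) := by
      intro w hw
      simp [Metric.mem_sphere, dist_eq_norm, norm_smul, hw, abs_of_pos hri]
    have hsphmem : ∀ w : EuclideanSpace ℝ (Fin n), ‖w‖ = 1 →
        ‖f (q i + r i • w) - c‖ = ρ := by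
      intro w hw
      have : f (q i + r i • w) ∈ Metric.sphere c ρ := by
        rw [← hsp]; exact Set.mem_image_of_mem f (hmems w hw)
      simpa [Metric.mem_sphere, dist_eq_norm] using this
    have hmemball : ∀ w : EuclideanSpace ℝ (Fin n), ‖w‖ = 1 →
        q i + r i • w ∈ Metric.ball p δ := fun w hw =>
      hsub (Metric.sphere_subset_closedBall (hmems w hw))
    have hqball : q i ∈ Metric.ball p δ :=
      hsub (Metric.mem_closedBall_self hri.le)
    have herr : ∀ w : EuclideanSpace ℝ (Fin n), ‖w‖ = 1 →
        ‖f (q i + r i • w) - f (q i) - r i • A w‖ ≤ ε * r i := by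
      intro w hw
      have h := hmvt (q i) hqball (q i + r i • w) (hmemball w hw)
      have heq : (q i + r i • w) - q i = r i • w := by abel
      rw [heq] at h
      rw [map_smul] at h
      calc ‖f (q i + r i • w) - f (q i) - r i • A w‖ ≤ ε * ‖r i • w‖ := h
        _ = ε * r i := by rw [norm_smul, hw]; simp [abs_of_pos hri]
    -- bound on ρ
    have hrho : ρ ≤ (‖A‖ + 1) * r i := by
      set e₀ : EuclideanSpace ℝ (Fin n) :=
        EuclideanSpace.single (⟨0, by omega⟩ : Fin n) (1 : ℝ) with he₀d
      have he₀ : ‖e₀‖ = 1 := by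
        rw [he₀d, EuclideanSpace.norm_single]; norm_num
      have hc1 : c + ρ • e₀ ∈ Metric.sphere c ρ := by
        simp [Metric.mem_sphere, dist_eq_norm, norm_smul, he₀, abs_of_pos hρpos]
      have hc2 : c - ρ • e₀ ∈ Metric.sphere c ρ := by
        simp [Metric.mem_sphere, dist_eq_norm, norm_smul, he₀, abs_of_pos hρpos]
      rw [← hsp] at hc1 hc2
      obtain ⟨x, hx, hfx⟩ := hc1
      obtain ⟨y, hy, hfy⟩ := hc2
      have hxb : x ∈ Metric.ball p δ := hsub (Metric.sphere_subset_closedBall hx)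
      have hyb : y ∈ Metric.ball p δ := hsub (Metric.sphere_subset_closedBall hy)
      have h2ρ : ‖f x - f y‖ = 2 * ρ := by
        rw [hfx, hfy]
        have : (c + ρ • e₀) - (c - ρ • e₀) = (2 * ρ) • e₀ := by module
        rw [this, norm_smul, he₀, mul_one, Real.norm_eq_abs,
          abs_of_pos (by positivity : (0:ℝ) < 2 * ρ)]
      have hxy : ‖x - y‖ ≤ 2 * r i := by
        rw [← dist_eq_norm]
        have hx' : dist x (q i) = r i := hx
        have hy' : dist y (q i) = r i := hy
        calc dist x y ≤ dist x (q i) + dist (q i) y := dist_triangle _ _ _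
          _ = r i + r i := by rw [hx', dist_comm, hy']
          _ = 2 * r i := by ring
      have hmv := hmvt y hyb x hxb
      have htri : ‖f x - f y‖ ≤ ‖A (x - y)‖ + ‖f x - f y - A (x - y)‖ := by
        have := norm_add_le (A (x - y)) (f x - f y - A (x - y))
        simpa using this
      have hop := A.le_opNorm (x - y)
      have hAnn : (0 : ℝ) ≤ ‖A‖ := norm_nonneg _
      have hxynn : (0 : ℝ) ≤ ‖x - y‖ := norm_nonneg _
      nlinarith [mul_le_mul_of_nonneg_left hxy hAnn,
        mul_le_mul_of_nonneg_left hxy hε.le]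
    -- key estimates on ‖b + r i • A w‖
    set b : EuclideanSpace ℝ (Fin n) := f (q i) - c with hb
    have hkey : ∀ w : EuclideanSpace ℝ (Fin n), ‖w‖ = 1 →
        |‖b + r i • A w‖ - ρ| ≤ ε * r i := by
      intro w hw
      have h1 := hsphmem w hw
      have h2 := herr w hw
      calc |‖b + r i • A w‖ - ρ|
          = |‖b + r i • A w‖ - ‖f (q i + r i • w) - c‖| := by rw [h1]
        _ ≤ ‖(b + r i • A w) - (f (q i + r i • w) - c)‖ :=
            abs_norm_sub_norm_le _ _
        _ = ‖f (q i + r i • w) - f (q i) - r i • A w‖ := by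
            rw [show (b + r i • A w) - (f (q i + r i • w) - c)
              = -(f (q i + r i • w) - f (q i) - r i • A w) by rw [hb]; abel]
            rw [norm_neg]
        _ ≤ ε * r i := h2
    have hun : ‖-u‖ = 1 := by rw [norm_neg]; exact hu1
    have hvn : ‖-v‖ = 1 := by rw [norm_neg]; exact hv1
    have hku := abs_le.mp (hkey u hu1)
    have hkv := abs_le.mp (hkey v hv1)
    have hku' := abs_le.mp (hkey (-u) hun)
    have hkv' := abs_le.mp (hkey (-v) hvn)
    rw [map_neg, smul_neg, ← sub_eq_add_neg] at hku' hkv'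
    -- parallelogram
    have Pu := parallelogram_law_with_norm ℝ b (r i • A u)
    have Pv := parallelogram_law_with_norm ℝ b (r i • A v)
    have hnAu : ‖r i • A u‖ = r i * ‖A u‖ := by
      rw [norm_smul]; simp [abs_of_pos hri]
    have hnAv : ‖r i • A v‖ = r i * ‖A v‖ := by
      rw [norm_smul]; simp [abs_of_pos hri]
    rw [hnAu] at Pu
    rw [hnAv] at Pv
    set au := ‖b + r i • A u‖ with hau
    set au' := ‖b - r i • A u‖ with hau'
    set av := ‖b + r i • A v‖ with hav
    set av' := ‖b - r i • A v‖ with hav'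
    have Hcomb := stmt6_aux ‖b‖ ‖A‖ ρ ε (r i) ‖A u‖ ‖A v‖ au au' av av'
      hri hε hε1 hρpos (norm_nonneg _) hrho
      (norm_nonneg _) (norm_nonneg _) (norm_nonneg _) (norm_nonneg _)
      (by linarith [hku.2]) (by linarith [hku'.2])
      (by linarith [hkv.1]) (by linarith [hkv'.1])
      (by linear_combination Pu) (by linear_combination Pv)
    linarith
  -- equal norms on the unit sphere
  have hsq : ∀ u v : EuclideanSpace ℝ (Fin n), ‖u‖ = 1 → ‖v‖ = 1 →
      ‖A u‖ ^ 2 ≤ ‖A v‖ ^ 2 := by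
    intro u v hu1 hv1
    by_contra hcon
    push_neg at hcon
    set K : ℝ := 10 * (‖A‖ + 1) with hK
    have hKpos : 0 < K := by positivity
    set ε₀ : ℝ := (‖A u‖ ^ 2 - ‖A v‖ ^ 2) / (2 * K) with hε₀
    have hε₀pos : 0 < ε₀ := by
      apply div_pos (by linarith) (by positivity)
    have hε : 0 < min ε₀ 1 := lt_min hε₀pos one_pos
    have h := main (min ε₀ 1) hε (min_le_right _ _) u v hu1 hv1
    have h5 : K * min ε₀ 1 ≤ K * ε₀ :=
      mul_le_mul_of_nonneg_left (min_le_left _ _) hKpos.le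
    have h6 : K * ε₀ = (‖A u‖ ^ 2 - ‖A v‖ ^ 2) / 2 := by
      rw [hε₀]; field_simp
    linarith
  have hkeynorm : ∀ u v : EuclideanSpace ℝ (Fin n), ‖u‖ = 1 → ‖v‖ = 1 →
      ‖A u‖ = ‖A v‖ := by
    intro u v hu1 hv1
    have h1 := hsq u v hu1 hv1
    have h2 := hsq v u hv1 hu1
    nlinarith [norm_nonneg (A u), norm_nonneg (A v)]
  -- construct the conformal factor and the isometry
  have hFin : (0 : ℕ) < n := by omega
  set e₀ : EuclideanSpace ℝ (Fin n) :=
    EuclideanSpace.single (⟨0, hFin⟩ : Fin n) (1 : ℝ) with he₀def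
  have he₀ : ‖e₀‖ = 1 := by simp [he₀def, EuclideanSpace.norm_single]
  set lam : ℝ := ‖A e₀‖ with hlamdef
  have he₀ne : e₀ ≠ 0 := by
    intro h; rw [h, norm_zero] at he₀; norm_num at he₀
  have hlampos : 0 < lam := by
    rw [hlamdef, norm_pos_iff]
    intro h
    have := (hinv p).1
    have h0 : A e₀ = A 0 := by simpa using h
    exact he₀ne (this h0)
  have hAx : ∀ x : EuclideanSpace ℝ (Fin n), ‖A x‖ = lam * ‖x‖ := by
    intro x
    rcases eq_or_ne x 0 with rfl | hx
    · simp
    · have hxn : (0 : ℝ) < ‖x‖ := norm_pos_iff.mpr hx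
      have hu1 : ‖‖x‖⁻¹ • x‖ = 1 := norm_smul_inv_norm hx
      have h := hkeynorm (‖x‖⁻¹ • x) e₀ hu1 he₀
      rw [map_smul, norm_smul, Real.norm_eq_abs, abs_inv, abs_norm] at h
      rw [← hlamdef] at h
      field_simp at h
      linarith [h]
  refine ⟨lam, ⟨lam⁻¹ • (A : EuclideanSpace ℝ (Fin n) →ₗ[ℝ] EuclideanSpace ℝ (Fin n)),
    fun x => ?_⟩, hlampos, fun x => ?_⟩
  · simp only [LinearMap.smul_apply, ContinuousLinearMap.coe_coe]
    rw [norm_smul, Real.norm_eq_abs, abs_inv, abs_of_pos hlampos, hAx]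
    field_simp
  · show A x = lam • (lam⁻¹ • A x)
    rw [smul_smul, mul_inv_cancel₀ hlampos.ne', one_smul]
end

section
/- Let f, g : ℝⁿ → ℝⁿ both be differentiable at a point p, and suppose f = g on a set Λ for which p is a point where the rescaled sets (Λ − p)/rₖ ∩ ∂B(0,1) become dense in the unit sphere as rₖ → 0 (e.g., p is a Lebesgue density point of Λ). Then D_p f = D_p g. -/
open Filter

theorem stmt_9 (n : ℕ) (f g : EuclideanSpace ℝ (Fin n) → EuclideanSpace ℝ (Fin n))
    (p : EuclideanSpace ℝ (Fin n))
    (Df Dg : EuclideanSpace ℝ (Fin n) →L[ℝ] EuclideanSpace ℝ (Fin n))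
    (hf : HasFDerivAt f Df p) (hg : HasFDerivAt g Dg p)
    (Λ : Set (EuclideanSpace ℝ (Fin n))) (heq : Set.EqOn f g Λ)
    (r : ℕ → ℝ) (hr : ∀ k, 0 < r k) (hrt : Tendsto r atTop (nhds 0))
    (hdens : ∀ x : EuclideanSpace ℝ (Fin n), ‖x‖ = 1 →
      ∃ xs : ℕ → EuclideanSpace ℝ (Fin n),
        (∀ k, ‖xs k‖ = 1 ∧ p + r k • xs k ∈ Λ) ∧ Tendsto xs atTop (nhds x)) :
    Df = Dg := by
  set D := Df - Dg with hDdef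
  set c := f p - g p with hc
  have hD : HasFDerivAt (fun y => f y - g y) D p := hf.sub hg
  have key : ∀ x : EuclideanSpace ℝ (Fin n), ‖x‖ = 1 → D x = 0 := by
    intro x hx
    obtain ⟨xs, hxs, hxt⟩ := hdens x hx
    set y : ℕ → EuclideanSpace ℝ (Fin n) := fun k => p + r k • xs k with hy
    have hnorm : ∀ k, ‖r k • xs k‖ = r k := by
      intro k
      rw [norm_smul, (hxs k).1, Real.norm_eq_abs, abs_of_pos (hr k), mul_one]
    have hyp : Tendsto y atTop (nhds p) := by
      have h0 : Tendsto (fun k => r k • xs k) atTop (nhds (0 : EuclideanSpace ℝ (Fin n))) := by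
        rw [tendsto_zero_iff_norm_tendsto_zero]
        simpa [hnorm] using hrt
      simpa using tendsto_const_nhds.add h0
    have hlo := (hD.isLittleO.comp_tendsto hyp).norm_norm
    have htd : Tendsto (fun k => ‖(f (y k) - g (y k)) - (f p - g p) - D (y k - p)‖ / ‖y k - p‖)
        atTop (nhds 0) :=
      hlo.tendsto_div_nhds_zero
    have hmem : ∀ k, f (y k) = g (y k) := fun k => heq (hxs k).2
    have htd2 : Tendsto (fun k => ‖(r k)⁻¹ • c + D (xs k)‖) atTop (nhds 0) := by
      refine htd.congr (fun k => ?_)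
      have h1 : y k - p = r k • xs k := by simp [y]
      have h2 : (f (y k) - g (y k)) - (f p - g p) - D (y k - p) = -(c + r k • D (xs k)) := by
        rw [hmem k, h1, map_smul]
        simp [hc]
        abel
      have h3 : (r k)⁻¹ • (c + r k • D (xs k)) = (r k)⁻¹ • c + D (xs k) := by
        rw [smul_add, smul_smul, inv_mul_cancel₀ (hr k).ne', one_smul]
      rw [h2, h1, hnorm k, norm_neg, ← h3, norm_smul, Real.norm_eq_abs, abs_inv,
        abs_of_pos (hr k), inv_mul_eq_div]
    have hz : Tendsto (fun k => (r k)⁻¹ • c + D (xs k)) atTop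
        (nhds (0 : EuclideanSpace ℝ (Fin n))) := by
      rwa [tendsto_zero_iff_norm_tendsto_zero]
    have hDx : Tendsto (fun k => D (xs k)) atTop (nhds (D x)) :=
      (D.continuous.tendsto x).comp hxt
    have hcl : Tendsto (fun k => (r k)⁻¹ • c) atTop (nhds (-D x)) := by
      have := hz.sub hDx
      simpa using this
    have hc0 : c = 0 := by
      by_contra hne
      have hinv : Tendsto (fun k => (r k)⁻¹) atTop atTop := by
        have hr' : Tendsto r atTop (nhdsWithin 0 (Set.Ioi 0)) :=
          tendsto_nhdsWithin_of_tendsto_nhds_of_eventually_within r hrt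
            (Filter.Eventually.of_forall hr)
        exact tendsto_inv_nhdsGT_zero.comp hr'
      have hAT : Tendsto (fun k => ‖(r k)⁻¹ • c‖) atTop atTop := by
        have heqn : (fun k => ‖(r k)⁻¹ • c‖) = fun k => (r k)⁻¹ * ‖c‖ := by
          funext k
          rw [norm_smul, Real.norm_eq_abs, abs_inv, abs_of_pos (hr k)]
        rw [heqn]
        exact hinv.atTop_mul_const (norm_pos_iff.mpr hne)
      exact not_tendsto_nhds_of_tendsto_atTop hAT _ (hcl.norm)
    have : Tendsto (fun k => D (xs k)) atTop (nhds (0 : EuclideanSpace ℝ (Fin n))) := by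
      have := hz
      simp [hc0] at this
      exact this
    exact tendsto_nhds_unique hDx this
  have hD0 : D = 0 := by
    ext1 v
    rcases eq_or_ne v 0 with hv | hv
    · simp [hv]
    · have hu : ‖(‖v‖⁻¹ • v)‖ = 1 := by
        rw [norm_smul, Real.norm_eq_abs, abs_inv, abs_norm,
          inv_mul_cancel₀ (norm_ne_zero_iff.mpr hv)]
      have := key _ hu
      rw [map_smul] at this
      have h2 := congrArg (fun w => ‖v‖ • w) this
      simpa [smul_smul, mul_inv_cancel₀ (norm_ne_zero_iff.mpr hv)] using h2
  have := sub_eq_zero.mp (hDdef ▸ hD0)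
  exact this
end

section
/- Let L : ℝⁿ → ℝⁿ be an invertible linear map, and suppose the images L(∂B(0,1)) arise as Hausdorff limits of spheres Sᵢ/rᵢ where each Sᵢ is a Euclidean sphere enclosing 0 (i.e., 0 lies in the open ball bounded by Sᵢ). If fᵢ(x) := (f(qᵢ + rᵢ x) − f(qᵢ))/rᵢ converges uniformly on ∂B(0,1) to L and each fᵢ(∂B(0,1)) is a Euclidean sphere enclosing 0, then L(∂B(0,1)) is a Euclidean sphere, and hence L is a conformal linear map (λ • T with λ > 0, T a linear isometry). -/
open Filter

private lemma unif_subseq {α β : Type*} [PseudoMetricSpace β] {F : ℕ → α → β} {f : α → β}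
    {s : Set α} (h : TendstoUniformlyOn F f atTop s) {φ : ℕ → ℕ} (hφ : StrictMono φ) :
    TendstoUniformlyOn (fun k => F (φ k)) f atTop s := by
  rw [Metric.tendstoUniformlyOn_iff] at h ⊢
  intro ε hε
  exact hφ.tendsto_atTop.eventually (h ε hε)

set_option maxHeartbeats 2000000 in
theorem stmt_15 (n : ℕ)
    (L : EuclideanSpace ℝ (Fin n) ≃ₗ[ℝ] EuclideanSpace ℝ (Fin n))
    (f : EuclideanSpace ℝ (Fin n) → EuclideanSpace ℝ (Fin n))
    (q : ℕ → EuclideanSpace ℝ (Fin n)) (r : ℕ → ℝ) (hr : ∀ i, 0 < r i)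
    (hconv : TendstoUniformlyOn (fun i x => (r i)⁻¹ • (f (q i + r i • x) - f (q i)))
      (fun x => L x) atTop (Metric.sphere 0 1))
    (hsph : ∀ i, ∃ (c : EuclideanSpace ℝ (Fin n)) (ρ : ℝ), ‖c‖ < ρ ∧
      (fun x => (r i)⁻¹ • (f (q i + r i • x) - f (q i))) '' Metric.sphere 0 1 =
        Metric.sphere c ρ) :
    (∃ (c : EuclideanSpace ℝ (Fin n)) (ρ : ℝ), 0 < ρ ∧
      (fun x => L x) '' Metric.sphere 0 1 = Metric.sphere c ρ) ∧
    ∃ (lam : ℝ) (T : EuclideanSpace ℝ (Fin n) →ₗᵢ[ℝ] EuclideanSpace ℝ (Fin n)),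
      0 < lam ∧ ∀ x, L x = lam • T x := by
  rcases Nat.eq_zero_or_pos n with hn | hn
  · subst hn
    have hempty : Metric.sphere (0 : EuclideanSpace ℝ (Fin 0)) 1 = ∅ := by
      ext x; simp [Subsingleton.elim x 0]
    constructor
    · exact ⟨0, 1, one_pos, by rw [hempty]; simp [hempty]⟩
    · exact ⟨1, LinearIsometry.id, one_pos, fun x => Subsingleton.elim _ _⟩
  -- main case : n ≥ 1
  haveI : Nontrivial (EuclideanSpace ℝ (Fin n)) :=
    Module.nontrivial_of_finrank_pos
      (show 0 < Module.finrank ℝ (EuclideanSpace ℝ (Fin n)) by simp [hn])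
  set F : ℕ → EuclideanSpace ℝ (Fin n) → EuclideanSpace ℝ (Fin n) :=
    fun i x => (r i)⁻¹ • (f (q i + r i • x) - f (q i)) with hFdef
  choose c ρ hcρ himg using hsph
  have himg' : ∀ i, F i '' Metric.sphere 0 1 = Metric.sphere (c i) (ρ i) := fun i => himg i
  have hρpos : ∀ i, 0 < ρ i := fun i => lt_of_le_of_lt (norm_nonneg _) (hcρ i)
  set Lc : EuclideanSpace ℝ (Fin n) →L[ℝ] EuclideanSpace ℝ (Fin n) :=
    LinearMap.toContinuousLinearMap (L : EuclideanSpace ℝ (Fin n) →ₗ[ℝ] EuclideanSpace ℝ (Fin n))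
    with hLcdef
  have hLc : ∀ x : EuclideanSpace ℝ (Fin n), Lc x = L x := fun _ => rfl
  -- the minimum of ‖L x‖ on the unit sphere
  obtain ⟨x₀, hx₀s, hx₀min⟩ := (isCompact_sphere (0 : EuclideanSpace ℝ (Fin n)) 1).exists_isMinOn
    (NormedSpace.sphere_nonempty.2 zero_le_one)
    (Continuous.continuousOn (by exact Lc.continuous.norm))
  set m := ‖L x₀‖ with hm
  have hm0 : 0 < m := by
    have hx0 : x₀ ≠ 0 := by
      intro h
      rw [mem_sphere_zero_iff_norm, h] at hx₀s
      simp at hx₀s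
    have : L x₀ ≠ 0 := fun h => hx0 (by simpa using L.injective (by simpa using h))
    exact norm_pos_iff.2 this
  have hmle : ∀ x ∈ Metric.sphere (0 : EuclideanSpace ℝ (Fin n)) 1, m ≤ ‖L x‖ :=
    fun x hx => hx₀min hx
  have hMle : ∀ x ∈ Metric.sphere (0 : EuclideanSpace ℝ (Fin n)) 1, ‖L x‖ ≤ ‖Lc‖ := by
    intro x hx
    have := Lc.le_opNorm x
    rw [hLc, mem_sphere_zero_iff_norm.1 hx, mul_one] at this
    exact this
  -- uniform closeness beyond some index N
  obtain ⟨N, hN⟩ := eventually_atTop.1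
    ((Metric.tendstoUniformlyOn_iff.1 hconv) (m / 2) (by positivity))
  -- every point of the i-th sphere has controlled norm (for i ≥ N)
  have hpt : ∀ i, N ≤ i → ∀ y ∈ Metric.sphere (c i) (ρ i),
      m / 2 ≤ ‖y‖ ∧ ‖y‖ ≤ ‖Lc‖ + m / 2 := by
    intro i hi y hy
    rw [← himg' i] at hy
    obtain ⟨x, hxs, hfx⟩ := hy
    have hd : dist (L x) y < m / 2 := by
      have := hN i hi x hxs
      rwa [hfx] at this
    have h1 : ‖L x‖ - ‖y‖ ≤ dist (L x) y := by
      rw [dist_eq_norm]; exact norm_sub_norm_le _ _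
    have h2 : ‖y‖ - ‖L x‖ ≤ dist (L x) y := by
      rw [dist_comm, dist_eq_norm]; exact norm_sub_norm_le _ _
    have h3 := hmle x hxs
    have h4 := hMle x hxs
    constructor <;> linarith
  -- a unit vector
  obtain ⟨u₀, hu₀s⟩ := (NormedSpace.sphere_nonempty
    (E := EuclideanSpace ℝ (Fin n)) (x := 0) (r := 1)).2 zero_le_one
  have hu₀ : ‖(u₀ : EuclideanSpace ℝ (Fin n))‖ = 1 := mem_sphere_zero_iff_norm.1 hu₀s
  -- bounds on the radii
  have hbnd : ∀ i, N ≤ i → m / 4 < ρ i ∧ ρ i ≤ ‖Lc‖ + m / 2 := by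
    intro i hi
    have h₁ : (c i + ρ i • u₀) ∈ Metric.sphere (c i) (ρ i) := by
      rw [Metric.mem_sphere, dist_eq_norm]
      simp [norm_smul, Real.norm_eq_abs, abs_of_pos (hρpos i), hu₀]
    have h₂ : (c i - ρ i • u₀) ∈ Metric.sphere (c i) (ρ i) := by
      rw [Metric.mem_sphere, dist_eq_norm]
      simp [norm_smul, Real.norm_eq_abs, abs_of_pos (hρpos i), hu₀]
    obtain ⟨ha1, ha2⟩ := hpt i hi _ h₁
    obtain ⟨hb1, hb2⟩ := hpt i hi _ h₂
    have hdiff : ‖(c i + ρ i • u₀) - (c i - ρ i • u₀)‖ = 2 * ρ i := by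
      have he : (c i + ρ i • u₀) - (c i - ρ i • u₀) = (2 * ρ i) • u₀ := by module
      rw [he, norm_smul, hu₀, mul_one, Real.norm_eq_abs,
        abs_of_pos (mul_pos two_pos (hρpos i))]
    have htri : ‖(c i + ρ i • u₀) - (c i - ρ i • u₀)‖ ≤
        ‖c i + ρ i • u₀‖ + ‖c i - ρ i • u₀‖ := norm_sub_le _ _
    have hup : ‖c i + ρ i • u₀‖ ≤ ‖c i‖ + ρ i := by
      have := norm_add_le (c i) (ρ i • u₀)
      rwa [norm_smul, hu₀, mul_one, Real.norm_eq_abs, abs_of_pos (hρpos i)] at this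
    have hci := hcρ i
    refine ⟨by nlinarith [hρpos i], by nlinarith [hρpos i]⟩
  -- extract a convergent subsequence of (c, ρ)
  set K : Set (EuclideanSpace ℝ (Fin n) × ℝ) :=
    (Metric.closedBall 0 (‖Lc‖ + m / 2)) ×ˢ (Set.Icc (m / 4) (‖Lc‖ + m / 2)) with hK
  have hKc : IsCompact K := (isCompact_closedBall _ _).prod isCompact_Icc
  have hgK : ∀ k, (c (N + k), ρ (N + k)) ∈ K := by
    intro k
    obtain ⟨hb1, hb2⟩ := hbnd (N + k) (Nat.le_add_right _ _)
    refine ⟨?_, le_of_lt hb1, hb2⟩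
    rw [Metric.mem_closedBall, dist_zero_right]
    exact le_trans (le_of_lt (hcρ _)) hb2
  obtain ⟨⟨c₀, ρ₀⟩, hcρ₀K, φ, hφ, hten⟩ := hKc.tendsto_subseq hgK
  set ψ : ℕ → ℕ := fun k => N + φ k with hψdef
  have hψmono : StrictMono ψ := fun a b h => Nat.add_lt_add_left (hφ h) N
  have hcten : Tendsto (fun k => c (ψ k)) atTop (nhds c₀) := by
    have := (continuous_fst.tendsto ((c₀, ρ₀) : EuclideanSpace ℝ (Fin n) × ℝ)).comp hten
    exact this
  have hρten : Tendsto (fun k => ρ (ψ k)) atTop (nhds ρ₀) := by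
    have := (continuous_snd.tendsto ((c₀, ρ₀) : EuclideanSpace ℝ (Fin n) × ℝ)).comp hten
    exact this
  have hρ₀pos : 0 < ρ₀ := lt_of_lt_of_le (by positivity) hcρ₀K.2.1
  -- Claim A: L maps the unit sphere into sphere c₀ ρ₀
  have hA : ∀ x ∈ Metric.sphere (0 : EuclideanSpace ℝ (Fin n)) 1,
      L x ∈ Metric.sphere c₀ ρ₀ := by
    intro x hx
    have h1 : Tendsto (fun k => F (ψ k) x) atTop (nhds (L x)) :=
      (hconv.tendsto_at hx).comp hψmono.tendsto_atTop
    have h2 : Tendsto (fun k => dist (F (ψ k) x) (c (ψ k))) atTop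
        (nhds (dist (L x) c₀)) := h1.dist hcten
    have h3 : ∀ k, dist (F (ψ k) x) (c (ψ k)) = ρ (ψ k) := by
      intro k
      have : F (ψ k) x ∈ Metric.sphere (c (ψ k)) (ρ (ψ k)) := by
        rw [← himg' (ψ k)]
        exact Set.mem_image_of_mem _ hx
      exact Metric.mem_sphere.1 this
    have h4 : Tendsto (fun k => ρ (ψ k)) atTop (nhds (dist (L x) c₀)) := by
      rw [show (fun k => ρ (ψ k)) = fun k => dist (F (ψ k) x) (c (ψ k)) from
        funext fun k => (h3 k).symm]
      exact h2
    exact Metric.mem_sphere.2 (tendsto_nhds_unique h4 hρten)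
  -- Claim B: every point of sphere c₀ ρ₀ is hit
  have hB : ∀ y ∈ Metric.sphere c₀ ρ₀,
      ∃ x ∈ Metric.sphere (0 : EuclideanSpace ℝ (Fin n)) 1, L x = y := by
    intro y hy
    set u : EuclideanSpace ℝ (Fin n) := ρ₀⁻¹ • (y - c₀) with hu
    have hyc : ‖y - c₀‖ = ρ₀ := by
      rw [← dist_eq_norm]; exact Metric.mem_sphere.1 hy
    have hunorm : ‖u‖ = 1 := by
      rw [hu, norm_smul, hyc, Real.norm_eq_abs, abs_of_pos (inv_pos.2 hρ₀pos),
        inv_mul_cancel₀ (ne_of_gt hρ₀pos)]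
    have hymem : ∀ k, (c (ψ k) + ρ (ψ k) • u) ∈ F (ψ k) '' Metric.sphere 0 1 := by
      intro k
      rw [himg' (ψ k), Metric.mem_sphere, dist_eq_norm]
      simp [norm_smul, Real.norm_eq_abs, abs_of_pos (hρpos (ψ k)), hunorm]
    choose x hxs hfx using fun k => hymem k
    obtain ⟨xlim, hxlims, φ₂, hφ₂, hxten⟩ :=
      (isCompact_sphere (0 : EuclideanSpace ℝ (Fin n)) 1).tendsto_subseq hxs
    have hyten : Tendsto (fun j => c (ψ (φ₂ j)) + ρ (ψ (φ₂ j)) • u) atTop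
        (nhds (c₀ + ρ₀ • u)) :=
      ((hcten.comp hφ₂.tendsto_atTop).add ((hρten.comp hφ₂.tendsto_atTop).smul_const u))
    have hceq : c₀ + ρ₀ • u = y := by
      rw [hu, smul_inv_smul₀ (ne_of_gt hρ₀pos)]
      abel
    have hFten : Tendsto (fun j => F (ψ (φ₂ j)) (x (φ₂ j))) atTop (nhds (L xlim)) := by
      have hunif : TendstoUniformlyOn (fun j => F (ψ (φ₂ j))) (fun x => L x) atTop
          (Metric.sphere (0 : EuclideanSpace ℝ (Fin n)) 1) :=
        unif_subseq hconv (hψmono.comp hφ₂)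
      refine hunif.tendsto_comp (Lc.continuous.continuousWithinAt) ?_
      rw [tendsto_nhdsWithin_iff]
      exact ⟨hxten, Eventually.of_forall fun j => hxs (φ₂ j)⟩
    have hFeq : (fun j => F (ψ (φ₂ j)) (x (φ₂ j))) =
        fun j => c (ψ (φ₂ j)) + ρ (ψ (φ₂ j)) • u := funext fun j => hfx (φ₂ j)
    rw [hFeq] at hFten
    exact ⟨xlim, hxlims, by rw [tendsto_nhds_unique hFten hyten, hceq]⟩
  -- the image is the sphere
  have himgL : (fun x => L x) '' Metric.sphere (0 : EuclideanSpace ℝ (Fin n)) 1 =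
      Metric.sphere c₀ ρ₀ := by
    apply Set.Subset.antisymm
    · rintro _ ⟨x, hx, rfl⟩
      exact hA x hx
    · intro y hy
      obtain ⟨x, hx, hLx⟩ := hB y hy
      exact ⟨x, hx, hLx⟩
  refine ⟨⟨c₀, ρ₀, hρ₀pos, himgL⟩, ?_⟩
  -- conformality
  have hLs : ∀ x : EuclideanSpace ℝ (Fin n), ‖x‖ = 1 → ‖L x - c₀‖ = ρ₀ := by
    intro x hx
    have := hA x (mem_sphere_zero_iff_norm.2 hx)
    rwa [Metric.mem_sphere, dist_eq_norm] at this
  have hperp : ∀ x : EuclideanSpace ℝ (Fin n), ‖x‖ = 1 → (inner ℝ (L x) c₀ : ℝ) = 0 := by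
    intro x hx
    have h1 : ‖L x - c₀‖ = ρ₀ := hLs x hx
    have h2 : ‖L (-x) - c₀‖ = ρ₀ := hLs (-x) (by rwa [norm_neg])
    have h2' : ‖L x + c₀‖ = ρ₀ := by
      rw [map_neg] at h2
      rw [← norm_neg]
      rw [neg_add']
      exact h2
    have e1 := norm_sub_sq_real (L x) c₀
    have e2 := norm_add_sq_real (L x) c₀
    have hsq : ‖L x - c₀‖ ^ 2 = ‖L x + c₀‖ ^ 2 := by rw [h1, h2']
    linarith [e1, e2, hsq]
  have hc₀ : c₀ = 0 := by
    by_contra hc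
    set z : EuclideanSpace ℝ (Fin n) := L.symm c₀ with hz
    have hz0 : z ≠ 0 := by
      intro h
      apply hc
      have : L z = c₀ := L.apply_symm_apply c₀
      rw [h, map_zero] at this
      exact this.symm
    have hzx : ‖(‖z‖⁻¹ • z : EuclideanSpace ℝ (Fin n))‖ = 1 := by
      rw [norm_smul, Real.norm_eq_abs, abs_of_pos (inv_pos.2 (norm_pos_iff.2 hz0)),
        inv_mul_cancel₀ (norm_ne_zero_iff.2 hz0)]
    have := hperp (‖z‖⁻¹ • z) hzx
    rw [map_smul, hz, L.apply_symm_apply, real_inner_smul_left,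
      real_inner_self_eq_norm_sq] at this
    have hc0 : ‖c₀‖ ≠ 0 := norm_ne_zero_iff.2 hc
    have hzn : (‖z‖:ℝ)⁻¹ ≠ 0 := inv_ne_zero (norm_ne_zero_iff.2 hz0)
    rcases mul_eq_zero.1 this with h | h
    · exact hzn h
    · exact hc0 ((pow_eq_zero_iff (two_ne_zero)).1 h)
  have hnorm1 : ∀ x : EuclideanSpace ℝ (Fin n), ‖x‖ = 1 → ‖L x‖ = ρ₀ := by
    intro x hx
    have := hLs x hx
    rwa [hc₀, sub_zero] at this
  have hhom : ∀ x : EuclideanSpace ℝ (Fin n), ‖L x‖ = ρ₀ * ‖x‖ := by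
    intro x
    rcases eq_or_ne x 0 with h | h
    · simp [h]
    · have hx1 : ‖(‖x‖⁻¹ • x : EuclideanSpace ℝ (Fin n))‖ = 1 := by
        rw [norm_smul, Real.norm_eq_abs, abs_of_pos (inv_pos.2 (norm_pos_iff.2 h)),
          inv_mul_cancel₀ (norm_ne_zero_iff.2 h)]
      have := hnorm1 _ hx1
      rw [map_smul, norm_smul, Real.norm_eq_abs,
        abs_of_pos (inv_pos.2 (norm_pos_iff.2 h))] at this
      have hxn : (0:ℝ) < ‖x‖ := norm_pos_iff.2 h
      field_simp at this
      linarith [this]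
  refine ⟨ρ₀, ⟨ρ₀⁻¹ • (L : EuclideanSpace ℝ (Fin n) →ₗ[ℝ] EuclideanSpace ℝ (Fin n)), ?_⟩,
    hρ₀pos, ?_⟩
  · intro x
    rw [LinearMap.smul_apply]
    show ‖ρ₀⁻¹ • (L x)‖ = ‖x‖
    rw [norm_smul, Real.norm_eq_abs, abs_of_pos (inv_pos.2 hρ₀pos), hhom,
      ← mul_assoc, inv_mul_cancel₀ (ne_of_gt hρ₀pos), one_mul]
  · intro x
    show L x = ρ₀ • (ρ₀⁻¹ • (L x))
    rw [smul_inv_smul₀ (ne_of_gt hρ₀pos)]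
end

section
/- Let f : ℝⁿ → ℝⁿ (n ≥ 1) be a map such that for every q ∈ ℝⁿ, f is differentiable at q with invertible derivative, the remainder estimate f(q + x) − f(q) − D_q f(x) = o(|x|) holds uniformly in q, and there exist sequences of balls B(qᵢ, rᵢ) with rᵢ → 0, cl(B(qᵢ, rᵢ)) → {p} in Hausdorff distance, and f(∂B(qᵢ, rᵢ)) a Euclidean sphere for each i. Then D_p f is conformal: D_p f = λ • T, λ > 0, T a linear isometry. -/
open Filter

set_option maxHeartbeats 4000000 in
theorem stmt_17 (n : ℕ) (hn : 1 ≤ n)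
    (f : EuclideanSpace ℝ (Fin n) → EuclideanSpace ℝ (Fin n))
    (D : EuclideanSpace ℝ (Fin n) → EuclideanSpace ℝ (Fin n) →L[ℝ] EuclideanSpace ℝ (Fin n))
    (hdiff : ∀ q, HasFDerivAt f (D q) q)
    (hinvD : ∀ q, Function.Bijective (D q))
    (hcont : Continuous D)
    (hunif : ∀ ε > (0 : ℝ), ∃ δ > (0 : ℝ), ∀ q x : EuclideanSpace ℝ (Fin n), ‖x‖ ≤ δ →
      ‖f (q + x) - f q - D q x‖ ≤ ε * ‖x‖)
    (p : EuclideanSpace ℝ (Fin n)) (q : ℕ → EuclideanSpace ℝ (Fin n)) (r : ℕ → ℝ)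
    (hr : ∀ i, 0 < r i) (hrt : Tendsto r atTop (nhds 0))
    (hH : Tendsto (fun i => Metric.hausdorffDist (Metric.closedBall (q i) (r i))
      ({p} : Set (EuclideanSpace ℝ (Fin n)))) atTop (nhds 0))
    (hsph : ∀ i, ∃ (c : EuclideanSpace ℝ (Fin n)) (ρ : ℝ), 0 < ρ ∧
      f '' Metric.sphere (q i) (r i) = Metric.sphere c ρ) :
    ∃ (lam : ℝ) (T : EuclideanSpace ℝ (Fin n) →ₗᵢ[ℝ] EuclideanSpace ℝ (Fin n)),
      0 < lam ∧ ∀ x, D p x = lam • T x := by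
  classical
  set e : EuclideanSpace ℝ (Fin n) := EuclideanSpace.single (⟨0, hn⟩ : Fin n) (1:ℝ) with hedef
  have hne : ‖e‖ = 1 := by simp [hedef, EuclideanSpace.norm_single]
  have he0 : e ≠ 0 := fun h => by simp [h] at hne
  haveI : Nontrivial (EuclideanSpace ℝ (Fin n)) := nontrivial_of_ne e 0 he0
  -- q i → p
  have hq : Tendsto q atTop (nhds p) := by
    rw [tendsto_iff_dist_tendsto_zero]
    refine squeeze_zero (fun i => dist_nonneg) (fun i => ?_) hH
    have hfin : EMetric.hausdorffEdist (Metric.closedBall (q i) (r i))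
        ({p} : Set (EuclideanSpace ℝ (Fin n))) ≠ ⊤ :=
      Metric.hausdorffEdist_ne_top_of_nonempty_of_bounded
        (Metric.nonempty_closedBall.mpr (hr i).le) (Set.singleton_nonempty p)
        Metric.isBounded_closedBall Bornology.isBounded_singleton
    simpa [Metric.infDist_singleton] using
      Metric.infDist_le_hausdorffDist_of_mem (Metric.mem_closedBall_self (hr i).le) hfin
  have hDq : Tendsto (fun i => D (q i)) atTop (nhds (D p)) := (hcont.tendsto p).comp hq
  set C : ℝ := 8 * ‖D p‖ + 20 with hCdef
  have hC0 : (0:ℝ) ≤ C := by positivity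
  -- the key quantitative estimate
  have key2 : ∀ x y : EuclideanSpace ℝ (Fin n), ‖x‖ = 1 → ‖y‖ = 1 →
      ‖D p x‖ ^ 2 ≤ ‖D p y‖ ^ 2 := by
    intro x y hx hy
    have main : ∀ ε : ℝ, 0 < ε → ε ≤ 1 → ‖D p x‖ ^ 2 ≤ ‖D p y‖ ^ 2 + ε * C := by
      intro ε hε hε1
      obtain ⟨δ, hδ, hu⟩ := hunif ε hε
      obtain ⟨i, hiD, hir⟩ :=
        ((Metric.tendsto_nhds.mp hDq ε hε).and (Metric.tendsto_nhds.mp hrt δ hδ)).exists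
      have hs0 : 0 < r i := hr i
      have hsδ : r i ≤ δ := by
        rw [Real.dist_eq, sub_zero, abs_of_pos hs0] at hir; exact hir.le
      obtain ⟨c, ρ, hρ, hsp⟩ := hsph i
      set s := r i with hsdef
      set A := D (q i) with hAdef
      set w := f (q i) - c with hwdef
      -- points of the sphere through q i
      have mem_s : ∀ z : EuclideanSpace ℝ (Fin n), ‖z‖ = 1 →
          q i + s • z ∈ Metric.sphere (q i) s := by
        intro z hz
        rw [mem_sphere_iff_norm]
        simp [norm_smul, hz, abs_of_pos hs0]
      -- annulus estimate
      have ann : ∀ z : EuclideanSpace ℝ (Fin n), ‖z‖ = 1 →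
          |‖w + s • A z‖ - ρ| ≤ ε * s := by
        intro z hz
        have hmem : f (q i + s • z) ∈ Metric.sphere c ρ := by
          rw [← hsp]; exact ⟨_, mem_s z hz, rfl⟩
        rw [mem_sphere_iff_norm] at hmem
        have hnsz : ‖s • z‖ = s := by
          rw [norm_smul, Real.norm_eq_abs, abs_of_pos hs0, hz, mul_one]
        have happ : ‖f (q i + s • z) - f (q i) - A (s • z)‖ ≤ ε * s := by
          have h := hu (q i) (s • z) (by rw [hnsz]; exact hsδ)
          rwa [hnsz] at h
        have hdiff2 : ‖(w + s • A z) - (f (q i + s • z) - c)‖ ≤ ε * s := by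
          have hrw : (w + s • A z) - (f (q i + s • z) - c)
              = -(f (q i + s • z) - f (q i) - A (s • z)) := by
            rw [hwdef, map_smul]; abel
          rw [hrw, norm_neg]; exact happ
        calc |‖w + s • A z‖ - ρ| = |‖w + s • A z‖ - ‖f (q i + s • z) - c‖| := by rw [hmem]
          _ ≤ ‖(w + s • A z) - (f (q i + s • z) - c)‖ := abs_norm_sub_norm_le _ _
          _ ≤ ε * s := hdiff2
      have ann' : ∀ z : EuclideanSpace ℝ (Fin n), ‖z‖ = 1 →
          |‖w - s • A z‖ - ρ| ≤ ε * s := by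
        intro z hz
        have hz' : ‖(-z : EuclideanSpace ℝ (Fin n))‖ = 1 := by rw [norm_neg]; exact hz
        have h := ann (-z) hz'
        rw [map_neg, smul_neg, ← sub_eq_add_neg] at h
        exact h
      -- parallelogram identity
      have par : ∀ z : EuclideanSpace ℝ (Fin n),
          ‖w + s • A z‖ ^ 2 + ‖w - s • A z‖ ^ 2 = 2 * ‖w‖ ^ 2 + 2 * s ^ 2 * ‖A z‖ ^ 2 := by
        intro z
        have h1 := norm_add_sq_real w (s • A z)
        have h2 := norm_sub_sq_real w (s • A z)
        have hns : ‖s • A z‖ = s * ‖A z‖ := by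
          rw [norm_smul, Real.norm_eq_abs, abs_of_pos hs0]
        rw [h1, h2, hns]; ring
      -- bound on ρ via the diameter of the image sphere
      have hρs : ρ ≤ s * (‖A‖ + ε) := by
        obtain ⟨u, hu'⟩ : (Metric.sphere c ρ).Nonempty := NormedSpace.sphere_nonempty.mpr hρ.le
        have hud : ‖u - c‖ = ρ := mem_sphere_iff_norm.mp hu'
        have hu2 : c + (c - u) ∈ Metric.sphere c ρ := by
          rw [mem_sphere_iff_norm]
          have hrw : c + (c - u) - c = -(u - c) := by abel
          rw [hrw, norm_neg, hud]
        rw [← hsp] at hu' hu2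
        obtain ⟨a, ha, hfa⟩ := hu'
        obtain ⟨b, hb, hfb⟩ := hu2
        rw [mem_sphere_iff_norm] at ha hb
        have happa : ‖f a - f (q i) - A (a - q i)‖ ≤ ε * s := by
          have h := hu (q i) (a - q i) (by rw [ha]; exact hsδ)
          have hqa : q i + (a - q i) = a := by abel
          rw [hqa, ha] at h; exact h
        have happb : ‖f b - f (q i) - A (b - q i)‖ ≤ ε * s := by
          have h := hu (q i) (b - q i) (by rw [hb]; exact hsδ)
          have hqb : q i + (b - q i) = b := by abel
          rw [hqb, hb] at h; exact h
        have hAa : ‖A (a - q i)‖ ≤ ‖A‖ * s := by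
          have h := A.le_opNorm (a - q i); rwa [ha] at h
        have hAb : ‖A (b - q i)‖ ≤ ‖A‖ * s := by
          have h := A.le_opNorm (b - q i); rwa [hb] at h
        have hdec : f a - f b = ((f a - f (q i) - A (a - q i)) - (f b - f (q i) - A (b - q i)))
            + (A (a - q i) - A (b - q i)) := by abel
        have hfb2 : ‖f a - f b‖ ≤ 2 * ε * s + 2 * (‖A‖ * s) := by
          rw [hdec]
          calc ‖((f a - f (q i) - A (a - q i)) - (f b - f (q i) - A (b - q i)))
                + (A (a - q i) - A (b - q i))‖
              ≤ ‖(f a - f (q i) - A (a - q i)) - (f b - f (q i) - A (b - q i))‖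
                + ‖A (a - q i) - A (b - q i)‖ := norm_add_le _ _
            _ ≤ (‖f a - f (q i) - A (a - q i)‖ + ‖f b - f (q i) - A (b - q i)‖)
                + (‖A (a - q i)‖ + ‖A (b - q i)‖) :=
                add_le_add (norm_sub_le _ _) (norm_sub_le _ _)
            _ ≤ (ε * s + ε * s) + (‖A‖ * s + ‖A‖ * s) :=
                add_le_add (add_le_add happa happb) (add_le_add hAa hAb)
            _ = 2 * ε * s + 2 * (‖A‖ * s) := by ring
        have h2ρ : ‖f a - f b‖ = 2 * ρ := by
          rw [hfa, hfb]
          have hrw : u - (c + (c - u)) = (2:ℝ) • (u - c) := by rw [two_smul]; abel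
          rw [hrw, norm_smul, hud]
          norm_num
        rw [h2ρ] at hfb2
        linarith
      -- squared comparison at q i
      have e1 := abs_le.mp (ann x hx)
      have e2 := abs_le.mp (ann' x hx)
      have e3 := abs_le.mp (ann y hy)
      have e4 := abs_le.mp (ann' y hy)
      have p1 := par x
      have p2 := par y
      have sq1 : ‖w + s • A x‖ ^ 2 ≤ (ρ + ε * s) ^ 2 :=
        pow_le_pow_left₀ (norm_nonneg _) (by linarith [e1.2]) 2
      have sq2 : ‖w - s • A x‖ ^ 2 ≤ (ρ + ε * s) ^ 2 :=
        pow_le_pow_left₀ (norm_nonneg _) (by linarith [e2.2]) 2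
      have hb1 : s ^ 2 * ‖A x‖ ^ 2 + ‖w‖ ^ 2 ≤ (ρ + ε * s) ^ 2 := by linarith [sq1, sq2, p1]
      have step1 : s ^ 2 * ‖A x‖ ^ 2 ≤ s ^ 2 * (‖A y‖ ^ 2 + 4 * ε * ‖A‖ + 8 * ε ^ 2) := by
        rcases le_or_gt ρ (ε * s) with hc | hc
        · have h45 : (ρ + ε * s) ^ 2 ≤ (2 * (ε * s)) ^ 2 :=
            pow_le_pow_left₀ (by positivity) (by linarith) 2
          have n1 : (0:ℝ) ≤ s ^ 2 * ‖A y‖ ^ 2 := by positivity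
          have n2 : (0:ℝ) ≤ ε * s ^ 2 * ‖A‖ := by positivity
          have n3 : (0:ℝ) ≤ ε ^ 2 * s ^ 2 := by positivity
          have n4 : (0:ℝ) ≤ ‖w‖ ^ 2 := sq_nonneg _
          linarith [hb1, h45, n1, n2, n3, n4]
        · have hc' : 0 ≤ ρ - ε * s := by linarith
          have sq3 : (ρ - ε * s) ^ 2 ≤ ‖w + s • A y‖ ^ 2 :=
            pow_le_pow_left₀ hc' (by linarith [e3.1]) 2
          have sq4 : (ρ - ε * s) ^ 2 ≤ ‖w - s • A y‖ ^ 2 :=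
            pow_le_pow_left₀ hc' (by linarith [e4.1]) 2
          have hb2 : (ρ - ε * s) ^ 2 ≤ s ^ 2 * ‖A y‖ ^ 2 + ‖w‖ ^ 2 := by
            linarith [sq3, sq4, p2]
          have hm : 4 * (ε * s) * ρ ≤ 4 * (ε * s) * (s * (‖A‖ + ε)) :=
            mul_le_mul_of_nonneg_left hρs (by positivity)
          linarith [hb1, hb2, hm, (by positivity : (0:ℝ) ≤ ε ^ 2 * s ^ 2)]
      have step2 : ‖A x‖ ^ 2 ≤ ‖A y‖ ^ 2 + 4 * ε * ‖A‖ + 8 * ε ^ 2 :=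
        le_of_mul_le_mul_left step1 (by positivity : (0:ℝ) < s ^ 2)
      -- transfer from q i to p
      have hdn : ‖A - D p‖ ≤ ε := by
        have h : dist A (D p) < ε := hiD
        rw [dist_eq_norm] at h; exact h.le
      have hdist : ‖D p - A‖ ≤ ε := by rw [norm_sub_rev]; exact hdn
      have hAx : |‖D p x‖ - ‖A x‖| ≤ ε := by
        calc |‖D p x‖ - ‖A x‖| ≤ ‖D p x - A x‖ := abs_norm_sub_norm_le _ _
          _ = ‖(D p - A) x‖ := by rw [ContinuousLinearMap.sub_apply]
          _ ≤ ‖D p - A‖ * ‖x‖ := (D p - A).le_opNorm x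
          _ ≤ ε := by rw [hx, mul_one]; exact hdist
      have hAy : |‖D p y‖ - ‖A y‖| ≤ ε := by
        calc |‖D p y‖ - ‖A y‖| ≤ ‖D p y - A y‖ := abs_norm_sub_norm_le _ _
          _ = ‖(D p - A) y‖ := by rw [ContinuousLinearMap.sub_apply]
          _ ≤ ‖D p - A‖ * ‖y‖ := (D p - A).le_opNorm y
          _ ≤ ε := by rw [hy, mul_one]; exact hdist
      have hAnorm : ‖A‖ ≤ ‖D p‖ + ε := by
        have h := norm_sub_norm_le A (D p)
        linarith [hdn]
      have hAxA : ‖A x‖ ≤ ‖A‖ := by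
        have h := A.le_opNorm x; rwa [hx, mul_one] at h
      have hDpy : ‖D p y‖ ≤ ‖D p‖ := by
        have h := (D p).le_opNorm y; rwa [hy, mul_one] at h
      have hax := abs_le.mp hAx
      have hay := abs_le.mp hAy
      have q1 : ‖D p x‖ ^ 2 ≤ ‖A x‖ ^ 2 + 2 * ε * ‖A x‖ + ε ^ 2 := by
        have h := pow_le_pow_left₀ (norm_nonneg (D p x))
          (by linarith [hax.2] : ‖D p x‖ ≤ ‖A x‖ + ε) 2
        calc ‖D p x‖ ^ 2 ≤ (‖A x‖ + ε) ^ 2 := h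
          _ = ‖A x‖ ^ 2 + 2 * ε * ‖A x‖ + ε ^ 2 := by ring
      have q2 : ‖A y‖ ^ 2 ≤ ‖D p y‖ ^ 2 + 2 * ε * ‖D p y‖ + ε ^ 2 := by
        have h := pow_le_pow_left₀ (norm_nonneg (A y))
          (by linarith [hay.1] : ‖A y‖ ≤ ‖D p y‖ + ε) 2
        calc ‖A y‖ ^ 2 ≤ (‖D p y‖ + ε) ^ 2 := h
          _ = ‖D p y‖ ^ 2 + 2 * ε * ‖D p y‖ + ε ^ 2 := by ring
      have q3 : 2 * ε * ‖A x‖ ≤ 2 * ε * (‖D p‖ + 1) := by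
        have : ‖A x‖ ≤ ‖D p‖ + 1 := by linarith [hAxA, hAnorm, hε1]
        exact mul_le_mul_of_nonneg_left this (by positivity)
      have q4 : 2 * ε * ‖D p y‖ ≤ 2 * ε * ‖D p‖ :=
        mul_le_mul_of_nonneg_left hDpy (by positivity)
      have q5 : 4 * ε * ‖A‖ ≤ 4 * ε * (‖D p‖ + 1) := by
        have : ‖A‖ ≤ ‖D p‖ + 1 := by linarith [hAnorm, hε1]
        exact mul_le_mul_of_nonneg_left this (by positivity)
      have q6 : ε ^ 2 ≤ ε := by
        calc ε ^ 2 = ε * ε := sq ε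
          _ ≤ ε * 1 := mul_le_mul_of_nonneg_left hε1 hε.le
          _ = ε := mul_one ε
      rw [hCdef]
      linarith [q1, q2, q3, q4, q5, q6, step2, hε.le]
    refine le_of_forall_pos_le_add ?_
    intro ε' hε'
    have hεp : 0 < min 1 (ε' / (C + 1)) := lt_min one_pos (by positivity)
    have hmain := main _ hεp (min_le_left _ _)
    have h2 : min 1 (ε' / (C + 1)) * C ≤ ε' := by
      have hle : min 1 (ε' / (C + 1)) ≤ ε' / (C + 1) := min_le_right _ _
      have hdiv : 0 ≤ ε' / (C + 1) := by positivity
      calc min 1 (ε' / (C + 1)) * C ≤ ε' / (C + 1) * C := mul_le_mul_of_nonneg_right hle hC0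
        _ ≤ ε' / (C + 1) * (C + 1) := mul_le_mul_of_nonneg_left (by linarith) hdiv
        _ = ε' := div_mul_cancel₀ _ (by positivity)
    linarith
  -- equal norms on the unit sphere
  have key : ∀ z : EuclideanSpace ℝ (Fin n), ‖z‖ = 1 → ‖D p z‖ = ‖D p e‖ := by
    intro z hz
    have h3 : ‖D p z‖ ^ 2 = ‖D p e‖ ^ 2 := le_antisymm (key2 z e hz hne) (key2 e z hne hz)
    exact (sq_eq_sq₀ (norm_nonneg _) (norm_nonneg _)).mp h3
  have hDe : D p e ≠ 0 := fun h => he0 ((hinvD p).1 (by rw [h, map_zero]))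
  have hpos : 0 < ‖D p e‖ := norm_pos_iff.mpr hDe
  have hlam : ∀ z : EuclideanSpace ℝ (Fin n), ‖D p z‖ = ‖D p e‖ * ‖z‖ := by
    intro z
    rcases eq_or_ne z 0 with h | h
    · simp [h]
    · have hz0 : ‖z‖ ≠ 0 := norm_ne_zero_iff.mpr h
      have hzz : ‖(‖z‖⁻¹ • z)‖ = 1 := by
        rw [norm_smul, norm_inv, norm_norm, inv_mul_cancel₀ hz0]
      have h4 := key _ hzz
      rw [map_smul, norm_smul, norm_inv, norm_norm] at h4
      field_simp at h4
      linarith [h4]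
  refine ⟨‖D p e‖, ⟨(‖D p e‖)⁻¹ • ((D p).toLinearMap), ?_⟩, hpos, ?_⟩
  · intro z
    rw [LinearMap.smul_apply]
    show ‖(‖D p e‖)⁻¹ • (D p z)‖ = ‖z‖
    rw [norm_smul, norm_inv, norm_norm, hlam z]
    field_simp
  · intro x
    show D p x = ‖D p e‖ • ((‖D p e‖)⁻¹ • (D p x))
    rw [smul_inv_smul₀ (ne_of_gt hpos)]
end
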